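/- Let q be an odd prime power and f = x⁴ + ax³y + bx²y² + cxy³ + dy⁴ a separable homogeneous quartic over F_q with discriminant Δ (of f(x,1)). Define j(f) = 256(b² − 3ac + 12d)³/Δ. Then j is invariant under the PGL₂(F_q) action: j(Γ(f)) = j(f) for every Γ ∈ PGL₂(F_q). -/

import Mathlib

open MvPolynomial

/-- The dehomogenization `f(x,1)` of a bivariate polynomial. -/
noncomputable def dehom {F : Type*} [CommRing F] (f : MvPolynomial (Fin 2) F) :
    Polynomial F :=
  MvPolynomial.aeval ![Polynomial.X, 1] f

/-- Linear substitution of the variables of a bivariate polynomial by a matrix `N`: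
`(substM N f)(v) = f(N·v)`. -/
noncomputable def substM {F : Type*} [Field F]
    (N : Matrix (Fin 2) (Fin 2) F) (f : MvPolynomial (Fin 2) F) :
    MvPolynomial (Fin 2) F :=
  MvPolynomial.aeval (fun i => C (N i 0) * X 0 + C (N i 1) * X 1) f

/-- The monic homogeneous quartic `x⁴ + ax³y + bx²y² + cxy³ + dy⁴`. -/
noncomputable def quarticPoly {F : Type*} [Field F] (a b c d : F) :
    MvPolynomial (Fin 2) F :=
  X 0 ^ 4 + C a * X 0 ^ 3 * X 1 + C b * X 0 ^ 2 * X 1 ^ 2 +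
    C c * X 0 * X 1 ^ 3 + C d * X 1 ^ 4

/-- The discriminant `∏_{i<j} (rᵢ − rⱼ)²` of a quartic with roots `r 0, …, r 3`. -/
noncomputable def discOfRoots {K : Type*} [Field K] (r : Fin 4 → K) : K :=
  ∏ i, ∏ j ∈ Finset.univ.filter (fun j => i < j), (r i - r j) ^ 2

section Helpers

open Polynomial

section CommRingHelpers

variable {R : Type*} [CommRing R]

lemma prodX (v : Fin 4 → R) :
    ∏ i, (Polynomial.X - Polynomial.C (v i)) =
      Polynomial.X^4 + Polynomial.C (-(v 0 + v 1 + v 2 + v 3)) * Polynomial.X^3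
        + Polynomial.C (v 0*v 1 + v 0*v 2 + v 0*v 3 + v 1*v 2 + v 1*v 3 + v 2*v 3) * Polynomial.X^2
        + Polynomial.C (-(v 0*v 1*v 2 + v 0*v 1*v 3 + v 0*v 2*v 3 + v 1*v 2*v 3)) * Polynomial.X
        + Polynomial.C (v 0*v 1*v 2*v 3) := by
  simp only [Fin.prod_univ_four, map_add, map_mul, map_neg]
  ring

lemma coeffs5 {m0 m1 m2 m3 m4 n0 n1 n2 n3 n4 : R}
    (h : Polynomial.C m0 * Polynomial.X^4 + Polynomial.C m1 * Polynomial.X^3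
          + Polynomial.C m2 * Polynomial.X^2 + Polynomial.C m3 * Polynomial.X + Polynomial.C m4
       = Polynomial.C n0 * Polynomial.X^4 + Polynomial.C n1 * Polynomial.X^3
          + Polynomial.C n2 * Polynomial.X^2 + Polynomial.C n3 * Polynomial.X + Polynomial.C n4) :
    m0 = n0 ∧ m1 = n1 ∧ m2 = n2 ∧ m3 = n3 ∧ m4 = n4 := by
  refine ⟨?_, ?_, ?_, ?_, ?_⟩
  · have := congrArg (fun P => Polynomial.coeff P 4) h
    simpa [Polynomial.coeff_add, Polynomial.coeff_C_mul, Polynomial.coeff_X_pow, Polynomial.coeff_C, Polynomial.coeff_X] using this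
  · have := congrArg (fun P => Polynomial.coeff P 3) h
    simpa [Polynomial.coeff_add, Polynomial.coeff_C_mul, Polynomial.coeff_X_pow, Polynomial.coeff_C, Polynomial.coeff_X] using this
  · have := congrArg (fun P => Polynomial.coeff P 2) h
    simpa [Polynomial.coeff_add, Polynomial.coeff_C_mul, Polynomial.coeff_X_pow, Polynomial.coeff_C, Polynomial.coeff_X] using this
  · have := congrArg (fun P => Polynomial.coeff P 1) h
    simpa [Polynomial.coeff_add, Polynomial.coeff_C_mul, Polynomial.coeff_X_pow, Polynomial.coeff_C, Polynomial.coeff_X] using this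
  · have := congrArg (fun P => Polynomial.coeff P 0) h
    simpa [Polynomial.coeff_add, Polynomial.coeff_C_mul, Polynomial.coeff_X_pow, Polynomial.coeff_C, Polynomial.coeff_X] using this

lemma expandSub (a b c d p q s t : R) :
    (Polynomial.C p * Polynomial.X + Polynomial.C q)^4
      + Polynomial.C a * (Polynomial.C p * Polynomial.X + Polynomial.C q)^3
        * (Polynomial.C s * Polynomial.X + Polynomial.C t)
      + Polynomial.C b * (Polynomial.C p * Polynomial.X + Polynomial.C q)^2
        * (Polynomial.C s * Polynomial.X + Polynomial.C t)^2
      + Polynomial.C c * (Polynomial.C p * Polynomial.X + Polynomial.C q)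
        * (Polynomial.C s * Polynomial.X + Polynomial.C t)^3
      + Polynomial.C d * (Polynomial.C s * Polynomial.X + Polynomial.C t)^4
    = Polynomial.C (p^4 + d*s^4 + c*p*s^3 + b*p^2*s^2 + a*p^3*s) * Polynomial.X^4
      + Polynomial.C (4*p^3*q + 4*d*s^3*t + c*q*s^3 + 3*c*p*s^2*t + 2*b*p*q*s^2 + 2*b*p^2*s*t
          + 3*a*p^2*q*s + a*p^3*t) * Polynomial.X^3
      + Polynomial.C (6*p^2*q^2 + 6*d*s^2*t^2 + 3*c*q*s^2*t + 3*c*p*s*t^2 + b*q^2*s^2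
          + 4*b*p*q*s*t + b*p^2*t^2 + 3*a*p*q^2*s + 3*a*p^2*q*t) * Polynomial.X^2
      + Polynomial.C (4*p*q^3 + 4*d*s*t^3 + 3*c*q*s*t^2 + c*p*t^3 + 2*b*q^2*s*t + 2*b*p*q*t^2
          + a*q^3*s + 3*a*p*q^2*t) * Polynomial.X
      + Polynomial.C (q^4 + d*t^4 + c*q*t^3 + b*q^2*t^2 + a*q^3*t) := by
  simp only [map_add, map_mul, map_pow, map_ofNat]
  ring

lemma numcov (a b c d p q s t : R) :
    (6*p^2*q^2 + 6*d*s^2*t^2 + 3*c*q*s^2*t + 3*c*p*s*t^2 + b*q^2*s^2 + 4*b*p*q*s*t + b*p^2*t^2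
        + 3*a*p*q^2*s + 3*a*p^2*q*t)^2
      - 3*(4*p^3*q + 4*d*s^3*t + c*q*s^3 + 3*c*p*s^2*t + 2*b*p*q*s^2 + 2*b*p^2*s*t
        + 3*a*p^2*q*s + a*p^3*t)
          *(4*p*q^3 + 4*d*s*t^3 + 3*c*q*s*t^2 + c*p*t^3 + 2*b*q^2*s*t + 2*b*p*q*t^2
        + a*q^3*s + 3*a*p*q^2*t)
      + 12*(p^4 + d*s^4 + c*p*s^3 + b*p^2*s^2 + a*p^3*s)*(q^4 + d*t^4 + c*q*t^3 + b*q^2*t^2 + a*q^3*t)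
    = (p*t - q*s)^4 * (b^2 - 3*a*c + 12*d) := by
  ring

lemma prodLin (v : Fin 4 → R) (p q s t : R) :
    ∏ i, (Polynomial.C (p - v i * s) * Polynomial.X + Polynomial.C (q - v i * t)) =
      (Polynomial.C p * Polynomial.X + Polynomial.C q)^4
      + Polynomial.C (-(v 0 + v 1 + v 2 + v 3)) * (Polynomial.C p * Polynomial.X + Polynomial.C q)^3
          * (Polynomial.C s * Polynomial.X + Polynomial.C t)
      + Polynomial.C (v 0*v 1 + v 0*v 2 + v 0*v 3 + v 1*v 2 + v 1*v 3 + v 2*v 3)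
          * (Polynomial.C p * Polynomial.X + Polynomial.C q)^2
          * (Polynomial.C s * Polynomial.X + Polynomial.C t)^2
      + Polynomial.C (-(v 0*v 1*v 2 + v 0*v 1*v 3 + v 0*v 2*v 3 + v 1*v 2*v 3))
          * (Polynomial.C p * Polynomial.X + Polynomial.C q)
          * (Polynomial.C s * Polynomial.X + Polynomial.C t)^3
      + Polynomial.C (v 0*v 1*v 2*v 3) * (Polynomial.C s * Polynomial.X + Polynomial.C t)^4 := by
  simp only [Fin.prod_univ_four, map_add, map_mul, map_neg, map_sub]
  ring

lemma prodLin2 (v : Fin 4 → R) (p q s t : R) :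
    ∏ i, (Polynomial.C (p - v i * s) * Polynomial.X + Polynomial.C (q - v i * t)) =
      Polynomial.C ((p - v 0*s) * (p - v 1*s) * (p - v 2*s) * (p - v 3*s)) * Polynomial.X^4
      + Polynomial.C ((q - v 0*t)*(p - v 1*s)*(p - v 2*s)*(p - v 3*s)
          + (p - v 0*s)*(q - v 1*t)*(p - v 2*s)*(p - v 3*s)
          + (p - v 0*s)*(p - v 1*s)*(q - v 2*t)*(p - v 3*s)
          + (p - v 0*s)*(p - v 1*s)*(p - v 2*s)*(q - v 3*t)) * Polynomial.X^3
      + Polynomial.C ((q - v 0*t)*(q - v 1*t)*(p - v 2*s)*(p - v 3*s)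
          + (q - v 0*t)*(p - v 1*s)*(q - v 2*t)*(p - v 3*s)
          + (q - v 0*t)*(p - v 1*s)*(p - v 2*s)*(q - v 3*t)
          + (p - v 0*s)*(q - v 1*t)*(q - v 2*t)*(p - v 3*s)
          + (p - v 0*s)*(q - v 1*t)*(p - v 2*s)*(q - v 3*t)
          + (p - v 0*s)*(p - v 1*s)*(q - v 2*t)*(q - v 3*t)) * Polynomial.X^2
      + Polynomial.C ((q - v 0*t)*(q - v 1*t)*(q - v 2*t)*(p - v 3*s)
          + (q - v 0*t)*(q - v 1*t)*(p - v 2*s)*(q - v 3*t)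
          + (q - v 0*t)*(p - v 1*s)*(q - v 2*t)*(q - v 3*t)
          + (p - v 0*s)*(q - v 1*t)*(q - v 2*t)*(q - v 3*t)) * Polynomial.X
      + Polynomial.C ((q - v 0*t)*(q - v 1*t)*(q - v 2*t)*(q - v 3*t)) := by
  simp only [Fin.prod_univ_four, map_add, map_mul, map_sub]
  ring

end CommRingHelpers

section FieldHelpers

variable {K : Type*} [Field K]

lemma linfac (t q : K) (ht : t ≠ 0) :
    Polynomial.C t * Polynomial.X + Polynomial.C q
      = Polynomial.C t * (Polynomial.X - Polynomial.C (-q / t)) := by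
  have h : t * (-q / t) = -q := by field_simp
  rw [mul_sub, ← map_mul, h, map_neg, sub_neg_eq_add]

lemma wdiff (al be ga de x y : K) (hx : al - x * ga ≠ 0) (hy : al - y * ga ≠ 0) :
    (-(be - x * de) / (al - x * ga)) - (-(be - y * de) / (al - y * ga))
      = (al * de - be * ga) * (x - y) / ((al - x * ga) * (al - y * ga)) := by
  rw [div_sub_div _ _ hx hy, div_eq_div_iff (mul_ne_zero hx hy) (mul_ne_zero hx hy)]
  ring

lemma comb (D d01 d02 d03 d12 d13 d23 t0 t1 t2 t3 : K)
    (h0 : t0 ≠ 0) (h1 : t1 ≠ 0) (h2 : t2 ≠ 0) (h3 : t3 ≠ 0) :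
    (D*d01/(t0*t1))^2 * (D*d02/(t0*t2))^2 * (D*d03/(t0*t3))^2 * (D*d12/(t1*t2))^2
        * (D*d13/(t1*t3))^2 * (D*d23/(t2*t3))^2
      = D^12 * (d01^2 * d02^2 * d03^2 * d12^2 * d13^2 * d23^2) / (t0*t1*t2*t3)^6 := by
  have n0 := pow_ne_zero 2 (mul_ne_zero h0 h1)
  have n1 := pow_ne_zero 2 (mul_ne_zero h0 h2)
  have n2 := pow_ne_zero 2 (mul_ne_zero h0 h3)
  have n3 := pow_ne_zero 2 (mul_ne_zero h1 h2)
  have n4 := pow_ne_zero 2 (mul_ne_zero h1 h3)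
  have n5 := pow_ne_zero 2 (mul_ne_zero h2 h3)
  have n6 := pow_ne_zero 6 (mul_ne_zero (mul_ne_zero (mul_ne_zero h0 h1) h2) h3)
  rw [div_pow, div_pow, div_pow, div_pow, div_pow, div_pow, div_mul_div_comm, div_mul_div_comm,
    div_mul_div_comm, div_mul_div_comm, div_mul_div_comm,
    div_eq_div_iff (mul_ne_zero (mul_ne_zero (mul_ne_zero (mul_ne_zero (mul_ne_zero n0 n1) n2) n3) n4) n5) n6]
  ring

lemma disc_explicit (v : Fin 4 → K) :
    discOfRoots v = (v 0 - v 1)^2 * (v 0 - v 2)^2 * (v 0 - v 3)^2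
      * (v 1 - v 2)^2 * (v 1 - v 3)^2 * (v 2 - v 3)^2 := by
  simp only [discOfRoots, Finset.prod_filter, Fin.prod_univ_four]
  simp only [show ¬((0:Fin 4) < 0) from by decide, show ((0:Fin 4) < 1) from by decide,
    show ((0:Fin 4) < 2) from by decide, show ((0:Fin 4) < 3) from by decide,
    show ¬((1:Fin 4) < 0) from by decide, show ¬((1:Fin 4) < 1) from by decide,
    show ((1:Fin 4) < 2) from by decide, show ((1:Fin 4) < 3) from by decide,
    show ¬((2:Fin 4) < 0) from by decide, show ¬((2:Fin 4) < 1) from by decide,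
    show ¬((2:Fin 4) < 2) from by decide, show ((2:Fin 4) < 3) from by decide,
    show ¬((3:Fin 4) < 0) from by decide, show ¬((3:Fin 4) < 1) from by decide,
    show ¬((3:Fin 4) < 2) from by decide, show ¬((3:Fin 4) < 3) from by decide,
    if_true, if_false]
  ring

lemma disc_erase (v : Fin 4 → K) :
    discOfRoots v = ∏ k, ∏ j ∈ Finset.univ.erase k, (v k - v j) := by
  have h : ∀ k : Fin 4, ∏ j ∈ Finset.univ.erase k, (v k - v j)
      = ∏ j ∈ Finset.univ.filter (fun j => j ≠ k), (v k - v j) := by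
    intro k
    congr 1
    ext j
    simp [Finset.mem_erase, Finset.mem_filter]
  simp only [h, Finset.prod_filter, Fin.prod_univ_four]
  simp only [show ((0:Fin 4) ≠ 1) from by decide, show ((0:Fin 4) ≠ 2) from by decide,
    show ((0:Fin 4) ≠ 3) from by decide, show ((1:Fin 4) ≠ 0) from by decide,
    show ((1:Fin 4) ≠ 2) from by decide, show ((1:Fin 4) ≠ 3) from by decide,
    show ((2:Fin 4) ≠ 0) from by decide, show ((2:Fin 4) ≠ 1) from by decide,
    show ((2:Fin 4) ≠ 3) from by decide, show ((3:Fin 4) ≠ 0) from by decide,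
    show ((3:Fin 4) ≠ 1) from by decide, show ((3:Fin 4) ≠ 2) from by decide,
    show ¬((0:Fin 4) ≠ 0) from by decide, show ¬((1:Fin 4) ≠ 1) from by decide,
    show ¬((2:Fin 4) ≠ 2) from by decide, show ¬((3:Fin 4) ≠ 3) from by decide,
    ne_eq, not_false_eq_true, not_true, if_true, if_false]
  rw [disc_explicit]
  ring

lemma prod_eq_multiset (v : Fin 4 → K) :
    ∏ i, (Polynomial.X - Polynomial.C (v i)) =
      (Multiset.map (fun a => Polynomial.X - Polynomial.C a) (Finset.univ.val.map v)).prod := by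
  rw [Multiset.map_map]
  rfl

lemma mseq (v w : Fin 4 → K)
    (h : ∏ i, (Polynomial.X - Polynomial.C (v i)) = ∏ i, (Polynomial.X - Polynomial.C (w i))) :
    Finset.univ.val.map v = Finset.univ.val.map w := by
  have := congrArg Polynomial.roots h
  rwa [prod_eq_multiset v, prod_eq_multiset w,
    Polynomial.roots_multiset_prod_X_sub_C, Polynomial.roots_multiset_prod_X_sub_C] at this

lemma eval_deriv (v : Fin 4 → K) (hv : Function.Injective v) (k : Fin 4) :
    (Polynomial.derivative (∏ i, (Polynomial.X - Polynomial.C (v i)))).eval (v k)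
      = ∏ j ∈ Finset.univ.erase k, (v k - v j) := by
  classical
  rw [prod_eq_multiset]
  rw [Polynomial.eval_multiset_prod_X_sub_C_derivative
    (Multiset.mem_map_of_mem v (Finset.mem_univ_val _))]
  rw [← Multiset.map_erase _ hv, ← Finset.erase_val, Multiset.map_map]
  rfl

lemma disc_eq_of_prod_eq (v w : Fin 4 → K) (hv : Function.Injective v)
    (hw : Function.Injective w)
    (h : ∏ i, (Polynomial.X - Polynomial.C (v i)) = ∏ i, (Polynomial.X - Polynomial.C (w i))) :
    discOfRoots v = discOfRoots w := by
  have hm := mseq v w h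
  have hv' : discOfRoots v
      = ∏ k, (Polynomial.derivative (∏ i, (Polynomial.X - Polynomial.C (v i)))).eval (v k) := by
    rw [disc_erase]
    exact Finset.prod_congr rfl fun k _ => (eval_deriv v hv k).symm
  have hw' : discOfRoots w
      = ∏ k, (Polynomial.derivative (∏ i, (Polynomial.X - Polynomial.C (v i)))).eval (w k) := by
    rw [disc_erase]
    refine Finset.prod_congr rfl fun k _ => ?_
    rw [h]
    exact (eval_deriv w hw k).symm
  rw [hv', hw']
  calc (∏ k, (Polynomial.derivative (∏ i, (Polynomial.X - Polynomial.C (v i)))).eval (v k))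
      = ((Finset.univ.val.map v).map
          fun x => (Polynomial.derivative (∏ i, (Polynomial.X - Polynomial.C (v i)))).eval x).prod := by
        rw [Multiset.map_map]; rfl
    _ = ((Finset.univ.val.map w).map
          fun x => (Polynomial.derivative (∏ i, (Polynomial.X - Polynomial.C (v i)))).eval x).prod := by
        rw [hm]
    _ = ∏ k, (Polynomial.derivative (∏ i, (Polynomial.X - Polynomial.C (v i)))).eval (w k) := by
        rw [Multiset.map_map]; rfl

end FieldHelpers

section DehomHelpers

variable {F : Type*} [Field F]

lemma dehom_quartic (a b c d : F) :
    dehom (quarticPoly a b c d) =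
      Polynomial.X^4 + Polynomial.C a * Polynomial.X^3 + Polynomial.C b * Polynomial.X^2
        + Polynomial.C c * Polynomial.X + Polynomial.C d := by
  simp only [dehom, quarticPoly, map_add, map_mul, map_pow, MvPolynomial.aeval_X, MvPolynomial.aeval_C,
    Matrix.cons_val_zero, Matrix.cons_val_one, Matrix.head_cons, Polynomial.algebraMap_apply,
    Algebra.algebraMap_self, RingHom.id_apply]
  ring

lemma dehom_substM (N : Matrix (Fin 2) (Fin 2) F) (f : MvPolynomial (Fin 2) F) :
    dehom (substM N f) =
      MvPolynomial.aeval
        ![Polynomial.C (N 0 0) * Polynomial.X + Polynomial.C (N 0 1),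
          Polynomial.C (N 1 0) * Polynomial.X + Polynomial.C (N 1 1)] f := by
  simp only [dehom, substM]
  rw [← AlgHom.comp_apply, MvPolynomial.comp_aeval]
  have hv : (fun i : Fin 2 =>
      MvPolynomial.aeval (R := F) ![Polynomial.X, 1]
        (MvPolynomial.C (N i 0) * MvPolynomial.X 0 + MvPolynomial.C (N i 1) * MvPolynomial.X 1)) =
      ![Polynomial.C (N 0 0) * Polynomial.X + Polynomial.C (N 0 1),
        Polynomial.C (N 1 0) * Polynomial.X + Polynomial.C (N 1 1)] := by
    funext i
    fin_cases i <;>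
      simp [Matrix.cons_val_zero, Matrix.cons_val_one, Matrix.head_cons,
        Polynomial.algebraMap_apply, mul_one]
  rw [hv]

lemma dehom_substM_quartic (N : Matrix (Fin 2) (Fin 2) F) (a b c d : F) :
    dehom (substM N (quarticPoly a b c d)) =
      (Polynomial.C (N 0 0) * Polynomial.X + Polynomial.C (N 0 1))^4
      + Polynomial.C a * (Polynomial.C (N 0 0) * Polynomial.X + Polynomial.C (N 0 1))^3
          * (Polynomial.C (N 1 0) * Polynomial.X + Polynomial.C (N 1 1))
      + Polynomial.C b * (Polynomial.C (N 0 0) * Polynomial.X + Polynomial.C (N 0 1))^2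
          * (Polynomial.C (N 1 0) * Polynomial.X + Polynomial.C (N 1 1))^2
      + Polynomial.C c * (Polynomial.C (N 0 0) * Polynomial.X + Polynomial.C (N 0 1))
          * (Polynomial.C (N 1 0) * Polynomial.X + Polynomial.C (N 1 1))^3
      + Polynomial.C d * (Polynomial.C (N 1 0) * Polynomial.X + Polynomial.C (N 1 1))^4 := by
  rw [dehom_substM]
  simp only [quarticPoly, map_add, map_mul, map_pow, MvPolynomial.aeval_X, MvPolynomial.aeval_C,
    Matrix.cons_val_zero, Matrix.cons_val_one, Matrix.head_cons, Polynomial.algebraMap_apply,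
    Algebra.algebraMap_self, RingHom.id_apply]

end DehomHelpers

end Helpers

/-- Let `q` be an odd prime power, `F` the field with `q` elements, and
`f = x⁴+ax³y+bx²y²+cxy³+dy⁴` a separable quartic over `F`, with roots `r : Fin 4 → K`
of `f(x,1)` in an algebraic closure `K` and discriminant `Δ = ∏_{i<j}(rᵢ−rⱼ)²`.
Define `j(f) = 256(b²−3ac+12d)³/Δ`.  If the class of a quartic
`g = x⁴+a'x³y+b'x²y²+c'xy³+d'y⁴` is the image of `f` under an element of `PGL₂(F)`
(i.e. a scalar multiple of `g` equals `f(d₀x−b₀y, −c₀x+a₀y)` for an invertible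
`[[a₀,b₀],[c₀,d₀]]`, the substitution matrix being the adjugate), then `j(g) = j(f)`. -/
theorem j_invariant_of_quartic_is_PGL2_invariant
    {F : Type*} [Field F] [Fintype F] (q : ℕ) (hq : Fintype.card F = q)
    (hodd : Odd q)
    {K : Type*} [Field K] [Algebra F K] [IsAlgClosure F K]
    (a b c d : F) (r : Fin 4 → K)
    (hroots : (dehom (quarticPoly a b c d)).map (algebraMap F K) =
      ∏ i, (Polynomial.X - Polynomial.C (r i)))
    (hsep : Function.Injective r)
    (M : GL (Fin 2) F) (a' b' c' d' : F) (u : Fˣ)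
    (horbit : (u : F) • quarticPoly a' b' c' d' =
      substM (Matrix.adjugate (M : Matrix (Fin 2) (Fin 2) F)) (quarticPoly a b c d))
    (r' : Fin 4 → K)
    (hroots' : (dehom (quarticPoly a' b' c' d')).map (algebraMap F K) =
      ∏ i, (Polynomial.X - Polynomial.C (r' i))) :
    algebraMap F K (256 * (b' ^ 2 - 3 * a' * c' + 12 * d') ^ 3) / discOfRoots r' =
      algebraMap F K (256 * (b ^ 2 - 3 * a * c + 12 * d) ^ 3) / discOfRoots r := by
  classical
  have hφinj : Function.Injective (algebraMap F K) := (algebraMap F K).injective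
  set N : Matrix (Fin 2) (Fin 2) F := Matrix.adjugate (M : Matrix (Fin 2) (Fin 2) F) with hN
  -- determinant of N is nonzero
  have hdet : N 0 0 * N 1 1 - N 0 1 * N 1 0 ≠ 0 := by
    have h1 : IsUnit (M : Matrix (Fin 2) (Fin 2) F).det :=
      (Matrix.isUnit_iff_isUnit_det _).mp (Units.isUnit M)
    have h2 : N.det = (M : Matrix (Fin 2) (Fin 2) F).det := by
      rw [hN, Matrix.det_adjugate]
      simp
    have h3 : N.det ≠ 0 := by rw [h2]; exact h1.ne_zero
    rwa [Matrix.det_fin_two] at h3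
  -- dehomogenized orbit identity over F
  have h5 := congrArg dehom horbit
  rw [dehom_substM_quartic] at h5
  have h6 : dehom ((u : F) • quarticPoly a' b' c' d')
      = Polynomial.C (u : F) * (Polynomial.X^4 + Polynomial.C a' * Polynomial.X^3
          + Polynomial.C b' * Polynomial.X^2 + Polynomial.C c' * Polynomial.X
          + Polynomial.C d') := by
    rw [show dehom ((u : F) • quarticPoly a' b' c' d')
        = (u : F) • dehom (quarticPoly a' b' c' d') from
      map_smul (MvPolynomial.aeval ![Polynomial.X, 1]) _ _, dehom_quartic,
      Polynomial.smul_eq_C_mul]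
  rw [h6] at h5
  -- coefficient extraction over F
  have hL : Polynomial.C (u : F) * (Polynomial.X^4 + Polynomial.C a' * Polynomial.X^3
        + Polynomial.C b' * Polynomial.X^2 + Polynomial.C c' * Polynomial.X + Polynomial.C d')
      = Polynomial.C ((u : F)) * Polynomial.X^4 + Polynomial.C ((u : F)*a') * Polynomial.X^3
        + Polynomial.C ((u : F)*b') * Polynomial.X^2 + Polynomial.C ((u : F)*c') * Polynomial.X
        + Polynomial.C ((u : F)*d') := by
    simp only [map_mul]
    ring
  have hF := (hL.symm.trans h5).trans (expandSub a b c d (N 0 0) (N 0 1) (N 1 0) (N 1 1))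
  obtain ⟨hg0, hg1, hg2, hg3, hg4⟩ := coeffs5 hF
  -- numerator covariance over F
  have hnum : (u : F)^2 * (b'^2 - 3*a'*c' + 12*d')
      = (N 0 0 * N 1 1 - N 0 1 * N 1 0)^4 * (b^2 - 3*a*c + 12*d) := by
    calc (u : F)^2 * (b'^2 - 3*a'*c' + 12*d')
        = ((u : F)*b')^2 - 3*(((u : F)*a')*((u : F)*c')) + 12*((u : F)*((u : F)*d')) := by ring
      _ = (6*(N 0 0)^2*(N 0 1)^2 + 6*d*(N 1 0)^2*(N 1 1)^2 + 3*c*(N 0 1)*(N 1 0)^2*(N 1 1)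
            + 3*c*(N 0 0)*(N 1 0)*(N 1 1)^2 + b*(N 0 1)^2*(N 1 0)^2
            + 4*b*(N 0 0)*(N 0 1)*(N 1 0)*(N 1 1) + b*(N 0 0)^2*(N 1 1)^2
            + 3*a*(N 0 0)*(N 0 1)^2*(N 1 0) + 3*a*(N 0 0)^2*(N 0 1)*(N 1 1))^2
          - 3*((4*(N 0 0)^3*(N 0 1) + 4*d*(N 1 0)^3*(N 1 1) + c*(N 0 1)*(N 1 0)^3
            + 3*c*(N 0 0)*(N 1 0)^2*(N 1 1) + 2*b*(N 0 0)*(N 0 1)*(N 1 0)^2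
            + 2*b*(N 0 0)^2*(N 1 0)*(N 1 1) + 3*a*(N 0 0)^2*(N 0 1)*(N 1 0) + a*(N 0 0)^3*(N 1 1))
            *(4*(N 0 0)*(N 0 1)^3 + 4*d*(N 1 0)*(N 1 1)^3 + 3*c*(N 0 1)*(N 1 0)*(N 1 1)^2
            + c*(N 0 0)*(N 1 1)^3 + 2*b*(N 0 1)^2*(N 1 0)*(N 1 1) + 2*b*(N 0 0)*(N 0 1)*(N 1 1)^2
            + a*(N 0 1)^3*(N 1 0) + 3*a*(N 0 0)*(N 0 1)^2*(N 1 1)))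
          + 12*(((N 0 0)^4 + d*(N 1 0)^4 + c*(N 0 0)*(N 1 0)^3 + b*(N 0 0)^2*(N 1 0)^2
            + a*(N 0 0)^3*(N 1 0))*((N 0 1)^4 + d*(N 1 1)^4 + c*(N 0 1)*(N 1 1)^3
            + b*(N 0 1)^2*(N 1 1)^2 + a*(N 0 1)^3*(N 1 1))) := by
          rw [hg1, hg2, hg3, hg4, hg0]
      _ = (N 0 0 * N 1 1 - N 0 1 * N 1 0)^4 * (b^2 - 3*a*c + 12*d) := by
          linear_combination numcov a b c d (N 0 0) (N 0 1) (N 1 0) (N 1 1)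
  -- root relations over K
  have hmapq : ∀ (x y z w : F), (dehom (quarticPoly x y z w)).map (algebraMap F K)
      = Polynomial.X^4 + Polynomial.C (algebraMap F K x) * Polynomial.X^3
        + Polynomial.C (algebraMap F K y) * Polynomial.X^2
        + Polynomial.C (algebraMap F K z) * Polynomial.X
        + Polynomial.C (algebraMap F K w) := by
    intro x y z w
    rw [dehom_quartic]
    simp only [Polynomial.map_add, Polynomial.map_mul, Polynomial.map_pow, Polynomial.map_X,
      Polynomial.map_C]
  have hr : Polynomial.X^4 + Polynomial.C (algebraMap F K a) * Polynomial.X^3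
      + Polynomial.C (algebraMap F K b) * Polynomial.X^2
      + Polynomial.C (algebraMap F K c) * Polynomial.X + Polynomial.C (algebraMap F K d)
      = ∏ i, (Polynomial.X - Polynomial.C (r i)) := by rw [← hmapq]; exact hroots
  have hr' : Polynomial.X^4 + Polynomial.C (algebraMap F K a') * Polynomial.X^3
      + Polynomial.C (algebraMap F K b') * Polynomial.X^2
      + Polynomial.C (algebraMap F K c') * Polynomial.X + Polynomial.C (algebraMap F K d')
      = ∏ i, (Polynomial.X - Polynomial.C (r' i)) := by rw [← hmapq]; exact hroots'
  have hmon : ∀ (c1 c2 c3 c4 : K), Polynomial.X^4 + Polynomial.C c1 * Polynomial.X^3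
      + Polynomial.C c2 * Polynomial.X^2 + Polynomial.C c3 * Polynomial.X + Polynomial.C c4
      = Polynomial.C 1 * Polynomial.X^4 + Polynomial.C c1 * Polynomial.X^3
      + Polynomial.C c2 * Polynomial.X^2 + Polynomial.C c3 * Polynomial.X + Polynomial.C c4 := by
    intro c1 c2 c3 c4
    rw [map_one, one_mul]
  obtain ⟨-, hA, hB, hC, hD⟩ := coeffs5 ((hmon _ _ _ _).symm.trans
    ((hr.trans (prodX r)).trans (hmon _ _ _ _)))
  -- map the orbit identity to K
  have hK := congrArg (Polynomial.map (algebraMap F K)) h5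
  simp only [Polynomial.map_mul, Polynomial.map_add, Polynomial.map_pow, Polynomial.map_C,
    Polynomial.map_X] at hK
  rw [hr', hA, hB, hC, hD,
    ← prodLin r (algebraMap F K (N 0 0)) (algebraMap F K (N 0 1)) (algebraMap F K (N 1 0))
      (algebraMap F K (N 1 1))] at hK
  set U : K := algebraMap F K ((u : F)) with hU
  set al : K := algebraMap F K (N 0 0) with hal
  set be : K := algebraMap F K (N 0 1) with hbe
  set ga : K := algebraMap F K (N 1 0) with hga
  set de : K := algebraMap F K (N 1 1) with hde
  have hUne : U ≠ 0 := by
    rw [hU]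
    intro h
    exact Units.ne_zero u (hφinj (by simpa using h))
  -- leading coefficient comparison over K
  have hL2 : Polynomial.C U * ∏ i, (Polynomial.X - Polynomial.C (r' i))
      = Polynomial.C U * Polynomial.X^4
        + Polynomial.C (U * (-(r' 0 + r' 1 + r' 2 + r' 3))) * Polynomial.X^3
        + Polynomial.C (U * (r' 0*r' 1 + r' 0*r' 2 + r' 0*r' 3 + r' 1*r' 2 + r' 1*r' 3 + r' 2*r' 3))
            * Polynomial.X^2
        + Polynomial.C (U * (-(r' 0*r' 1*r' 2 + r' 0*r' 1*r' 3 + r' 0*r' 2*r' 3 + r' 1*r' 2*r' 3)))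
            * Polynomial.X
        + Polynomial.C (U * (r' 0*r' 1*r' 2*r' 3)) := by
    rw [prodX]
    simp only [map_mul]
    ring
  have hF2 := (hL2.symm.trans hK).trans (prodLin2 r al be ga de)
  have k0 : U = (al - r 0*ga) * (al - r 1*ga) * (al - r 2*ga) * (al - r 3*ga) := (coeffs5 hF2).1
  have k0' : U = ∏ i, (al - r i * ga) := by rw [Fin.prod_univ_four]; exact k0
  have ht : ∀ i, al - r i * ga ≠ 0 := fun i h =>
    hUne (k0'.trans (Finset.prod_eq_zero (Finset.mem_univ i) h))
  have hDkne : al * de - be * ga ≠ 0 := by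
    intro h
    apply hdet
    apply hφinj
    rw [map_sub, map_mul, map_mul, map_zero]
    exact h
  -- factor the right-hand side
  have hfac : ∏ i, (Polynomial.C (al - r i * ga) * Polynomial.X + Polynomial.C (be - r i * de))
      = Polynomial.C U * ∏ i, (Polynomial.X - Polynomial.C (-(be - r i * de) / (al - r i * ga))) := by
    calc ∏ i, (Polynomial.C (al - r i*ga) * Polynomial.X + Polynomial.C (be - r i*de))
        = ∏ i, (Polynomial.C (al - r i*ga)
            * (Polynomial.X - Polynomial.C (-(be - r i*de) / (al - r i*ga)))) :=
          Finset.prod_congr rfl fun i _ => linfac _ _ (ht i)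
      _ = (∏ i, Polynomial.C (al - r i*ga))
            * ∏ i, (Polynomial.X - Polynomial.C (-(be - r i*de)/(al - r i*ga))) :=
          Finset.prod_mul_distrib
      _ = Polynomial.C U
            * ∏ i, (Polynomial.X - Polynomial.C (-(be - r i*de)/(al - r i*ga))) := by
          rw [← map_prod, ← k0']
  have hPP : ∏ i, (Polynomial.X - Polynomial.C (r' i))
      = ∏ i, (Polynomial.X - Polynomial.C (-(be - r i * de) / (al - r i * ga))) := by
    have hCU : (Polynomial.C U) ≠ 0 := fun h =>
      hUne (by simpa using congrArg (fun P => Polynomial.coeff P 0) h)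
    exact mul_left_cancel₀ hCU (hK.trans hfac)
  -- injectivity of the transformed roots
  have key : ∀ i j : Fin 4, i ≠ j →
      (-(be - r i * de) / (al - r i * ga)) ≠ (-(be - r j * de) / (al - r j * ga)) := by
    intro i j hne heq
    have hd := wdiff al be ga de (r i) (r j) (ht i) (ht j)
    rw [heq, sub_self] at hd
    have h9 := (div_eq_zero_iff.mp hd.symm).resolve_right (mul_ne_zero (ht i) (ht j))
    rcases mul_eq_zero.mp h9 with h | h
    · exact hDkne h
    · exact (sub_ne_zero.mpr fun hrr => hne (hsep hrr)) h
  have iw : Function.Injective (fun i : Fin 4 => -(be - r i * de) / (al - r i * ga)) := by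
    intro i j heq
    by_contra hne
    exact key i j hne heq
  have hir' : Function.Injective r' := by
    have hm := mseq r' (fun i => -(be - r i * de) / (al - r i * ga)) hPP
    have hnd : (Finset.univ.val.map (fun i : Fin 4 => -(be - r i * de) / (al - r i * ga))).Nodup :=
      Multiset.Nodup.map iw Finset.univ.nodup
    rw [← hm] at hnd
    intro i j hij
    exact (Multiset.nodup_map_iff_inj_on Finset.univ.nodup).mp hnd i (Finset.mem_univ_val _)
      j (Finset.mem_univ_val _) hij
  -- discriminant transfer through the common polynomial
  have hdt : discOfRoots r' = discOfRoots (fun i : Fin 4 => -(be - r i * de) / (al - r i * ga)) :=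
    disc_eq_of_prod_eq _ _ hir' iw hPP
  -- discriminant covariance
  have hdw : discOfRoots (fun i : Fin 4 => -(be - r i * de) / (al - r i * ga))
      = (al * de - be * ga)^12 * discOfRoots r / U^6 := by
    rw [disc_explicit (fun i : Fin 4 => -(be - r i * de) / (al - r i * ga)), disc_explicit r]
    rw [wdiff al be ga de (r 0) (r 1) (ht 0) (ht 1), wdiff al be ga de (r 0) (r 2) (ht 0) (ht 2),
        wdiff al be ga de (r 0) (r 3) (ht 0) (ht 3), wdiff al be ga de (r 1) (r 2) (ht 1) (ht 2),
        wdiff al be ga de (r 1) (r 3) (ht 1) (ht 3), wdiff al be ga de (r 2) (r 3) (ht 2) (ht 3),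
        k0]
    exact comb (al * de - be * ga) (r 0 - r 1) (r 0 - r 2) (r 0 - r 3) (r 1 - r 2) (r 1 - r 3)
      (r 2 - r 3) (al - r 0*ga) (al - r 1*ga) (al - r 2*ga) (al - r 3*ga)
      (ht 0) (ht 1) (ht 2) (ht 3)
  -- nonvanishing of the discriminant
  have hne_sub : ∀ i j : Fin 4, i ≠ j → r i - r j ≠ 0 := fun i j hne =>
    sub_ne_zero.mpr fun h => hne (hsep h)
  have hΔ : discOfRoots r ≠ 0 := by
    rw [disc_explicit]
    exact mul_ne_zero (mul_ne_zero (mul_ne_zero (mul_ne_zero (mul_ne_zero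
      (pow_ne_zero 2 (hne_sub 0 1 (by decide))) (pow_ne_zero 2 (hne_sub 0 2 (by decide))))
      (pow_ne_zero 2 (hne_sub 0 3 (by decide)))) (pow_ne_zero 2 (hne_sub 1 2 (by decide))))
      (pow_ne_zero 2 (hne_sub 1 3 (by decide)))) (pow_ne_zero 2 (hne_sub 2 3 (by decide)))
  -- mapped numerator covariance
  have hnumK : U^2 * ((algebraMap F K b')^2 - 3*(algebraMap F K a')*(algebraMap F K c')
        + 12*(algebraMap F K d'))
      = (al * de - be * ga)^4 * ((algebraMap F K b)^2
        - 3*(algebraMap F K a)*(algebraMap F K c) + 12*(algebraMap F K d)) := by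
    have h10 := congrArg (algebraMap F K) hnum
    simp only [map_mul, map_pow, map_sub, map_add, map_ofNat] at h10
    exact h10
  have hcube : U^6 * ((algebraMap F K b')^2 - 3*(algebraMap F K a')*(algebraMap F K c')
        + 12*(algebraMap F K d'))^3
      = (al * de - be * ga)^12 * ((algebraMap F K b)^2
        - 3*(algebraMap F K a)*(algebraMap F K c) + 12*(algebraMap F K d))^3 := by
    calc U^6 * ((algebraMap F K b')^2 - 3*(algebraMap F K a')*(algebraMap F K c')
          + 12*(algebraMap F K d'))^3
        = (U^2 * ((algebraMap F K b')^2 - 3*(algebraMap F K a')*(algebraMap F K c')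
          + 12*(algebraMap F K d')))^3 := by ring
      _ = ((al * de - be * ga)^4 * ((algebraMap F K b)^2
          - 3*(algebraMap F K a)*(algebraMap F K c) + 12*(algebraMap F K d)))^3 := by rw [hnumK]
      _ = (al * de - be * ga)^12 * ((algebraMap F K b)^2
          - 3*(algebraMap F K a)*(algebraMap F K c) + 12*(algebraMap F K d))^3 := by ring
  -- final assembly
  have hΔ'ne : discOfRoots r' ≠ 0 := by
    rw [hdt, hdw]
    exact div_ne_zero (mul_ne_zero (pow_ne_zero _ hDkne) hΔ) (pow_ne_zero _ hUne)
  have hgL : algebraMap F K (256 * (b' ^ 2 - 3 * a' * c' + 12 * d') ^ 3)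
      = 256 * ((algebraMap F K b')^2 - 3*(algebraMap F K a')*(algebraMap F K c')
        + 12*(algebraMap F K d'))^3 := by
    simp only [map_mul, map_pow, map_sub, map_add, map_ofNat]
  have hgR : algebraMap F K (256 * (b ^ 2 - 3 * a * c + 12 * d) ^ 3)
      = 256 * ((algebraMap F K b)^2 - 3*(algebraMap F K a)*(algebraMap F K c)
        + 12*(algebraMap F K d))^3 := by
    simp only [map_mul, map_pow, map_sub, map_add, map_ofNat]
  rw [hgL, hgR, div_eq_div_iff hΔ'ne hΔ, hdt, hdw, ← mul_div_assoc,
    eq_div_iff (pow_ne_zero 6 hUne)]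
  linear_combination 256 * discOfRoots r * hcube
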